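/- Let l, n > 0 and q ≥ 2 be integers. Then there exists a positive integer N (one may take N = q^n(q^{n!} − 1)) with the following property: if B ⊆ ℝ_{≥0} is a subset such that (1) for every b ∈ B with b > l one has b − 1 ∈ B, (2) for every b ∈ B one has q·b ∈ B, and (3) the set B ∩ [0, l] has at most n elements, then every element of B is of the form k/N for some integer k ≥ 0. -/

import Mathlib

/-- If `B ⊆ ℝ_{≥0}` is closed under subtracting 1 (above `l`) and under multiplication
by `q`, and `B ∩ [0, l]` has at most `n` elements, then every element of `B` has the
form `k/N` with `N = q^n(q^{n!} − 1)`. -/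
theorem acc_denominator_bound (l n q : ℕ) (hl : 0 < l) (hn : 0 < n) (hq : 2 ≤ q) :
    ∃ N : ℕ, 0 < N ∧ ∀ B : Set ℝ,
      (∀ b ∈ B, (0 : ℝ) ≤ b) →
      (∀ b ∈ B, (l : ℝ) < b → b - 1 ∈ B) →
      (∀ b ∈ B, (q : ℝ) * b ∈ B) →
      (B ∩ Set.Icc (0 : ℝ) (l : ℝ)).Finite →
      (B ∩ Set.Icc (0 : ℝ) (l : ℝ)).ncard ≤ n →
      ∀ b ∈ B, ∃ k : ℕ, b = (k : ℝ) / (N : ℝ) := by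
  have hq1 : 1 < q := hq
  have hN2 : 2 ≤ q ^ n.factorial := le_trans hq (Nat.le_self_pow (Nat.factorial_ne_zero n) q)
  have hNpos : 0 < q ^ n * (q ^ n.factorial - 1) :=
    Nat.mul_pos (Nat.pow_pos (n := n) (by omega)) (by omega)
  refine ⟨q ^ n * (q ^ n.factorial - 1), hNpos, ?_⟩
  intro B hB0 hBsub hBmul hfin hcard
  set N := q ^ n * (q ^ n.factorial - 1) with hNdef
  have hNR : (0 : ℝ) < (N : ℝ) := by exact_mod_cast hNpos
  -- reduction lemma
  have reduce : ∀ b ∈ B, ∃ m : ℕ, b - m ∈ B ∩ Set.Icc (0 : ℝ) (l : ℝ) := by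
    have main : ∀ K : ℕ, ∀ b ∈ B, ⌈b⌉₊ ≤ K → ∃ m : ℕ, b - m ∈ B ∩ Set.Icc (0 : ℝ) (l : ℝ) := by
      intro K
      induction K with
      | zero =>
        intro b hb hK
        refine ⟨0, by simpa using hb, ?_⟩
        have h0 : (0 : ℝ) ≤ b := hB0 b hb
        have hb0 : b ≤ 0 := by
          by_contra h
          push_neg at h
          have := Nat.ceil_pos.mpr h
          omega
        have hl1 : (1 : ℝ) ≤ (l : ℝ) := by exact_mod_cast hl
        push_cast
        constructor <;> linarith
      | succ K ih =>
        intro b hb hK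
        by_cases hbl : b ≤ (l : ℝ)
        · exact ⟨0, by simpa using hb, by simp only [Nat.cast_zero, sub_zero]; exact ⟨hB0 b hb, hbl⟩⟩
        · push_neg at hbl
          have hl1 : (1 : ℝ) ≤ (l : ℝ) := by exact_mod_cast hl
          have hb1 : b - 1 ∈ B := hBsub b hb hbl
          have hceil : ⌈b - 1⌉₊ ≤ K := by
            have h1 : (⌈b - 1⌉₊ : ℝ) < b := by
              have := Nat.ceil_lt_add_one (by linarith : (0:ℝ) ≤ b - 1)
              linarith
            have h2 : b ≤ (⌈b⌉₊ : ℝ) := Nat.le_ceil b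
            have h3 : (⌈b - 1⌉₊ : ℝ) < (⌈b⌉₊ : ℝ) := lt_of_lt_of_le h1 h2
            have := Nat.cast_lt.mp h3
            omega
          obtain ⟨m, hm⟩ := ih (b - 1) hb1 hceil
          refine ⟨m + 1, ?_⟩
          have heq : b - (↑(m + 1) : ℝ) = (b - 1) - m := by push_cast; ring
          rw [heq]; exact hm
    intro b hb
    exact main ⌈b⌉₊ b hb le_rfl
  -- main lemma for elements of B ∩ [0,l]
  have key : ∀ x ∈ B ∩ Set.Icc (0 : ℝ) (l : ℝ), ∃ k : ℕ, x = (k : ℝ) / (N : ℝ) := by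
    intro x hx
    have seq : ∀ i : ℕ, ∃ c : ℕ, (q : ℝ) ^ i * x - c ∈ B ∩ Set.Icc (0 : ℝ) (l : ℝ) := by
      intro i
      induction i with
      | zero => exact ⟨0, by simpa using hx⟩
      | succ i ih =>
        obtain ⟨c, hc⟩ := ih
        have h1 : (q : ℝ) * ((q : ℝ) ^ i * x - c) ∈ B := hBmul _ hc.1
        obtain ⟨m, hm⟩ := reduce _ h1
        refine ⟨q * c + m, ?_⟩
        have heq : (q : ℝ) ^ (i + 1) * x - ↑(q * c + m) =
            (q : ℝ) * ((q : ℝ) ^ i * x - c) - m := by push_cast; ring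
        rw [heq]; exact hm
    choose c hc using seq
    -- a key sub-lemma for ordered pair
    have main : ∀ a b : ℕ, a < b → b ≤ n →
        (q : ℝ) ^ a * x - c a = (q : ℝ) ^ b * x - c b → ∃ k : ℕ, x = (k : ℝ) / (N : ℝ) := by
      intro a b hab hbn heq
      have hx0 : (0 : ℝ) ≤ x := hx.2.1
      have hqR : (1 : ℝ) < (q : ℝ) := by exact_mod_cast hq1
      have hpowlt : (q : ℝ) ^ a < (q : ℝ) ^ b := pow_lt_pow_right₀ hqR hab
      have heq2 : ((q : ℝ) ^ b - (q : ℝ) ^ a) * x = (c b : ℝ) - c a := by linarith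
      have hcab : c a ≤ c b := by
        have h1 : (0 : ℝ) ≤ (c b : ℝ) - c a := by nlinarith
        have := sub_nonneg.mp h1
        exact_mod_cast this
      -- divisibility
      set M := q ^ b - q ^ a with hMdef
      have hpowle : q ^ a ≤ q ^ b := Nat.pow_le_pow_right (by omega) hab.le
      have hMeq : M = q ^ a * (q ^ (b - a) - 1) := by
        rw [Nat.mul_sub, mul_one, ← pow_add, Nat.add_sub_cancel' hab.le]
      have hd1 : q ^ a ∣ q ^ n := pow_dvd_pow q (le_trans hab.le hbn)
      have hd2 : q ^ (b - a) - 1 ∣ q ^ n.factorial - 1 := by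
        have hdvd : (b - a) ∣ n.factorial := Nat.dvd_factorial (by omega) (by omega)
        obtain ⟨t, ht⟩ := hdvd
        have := Nat.sub_dvd_pow_sub_pow (q ^ (b - a)) 1 t
        rwa [← pow_mul, one_pow, ← ht] at this
      have hMN : M ∣ N := hMeq ▸ mul_dvd_mul hd1 hd2
      obtain ⟨d, hdN⟩ := hMN
      have hMpos : 0 < M := by
        have : q ^ a < q ^ b := Nat.pow_lt_pow_right hq1 hab
        omega
      have hdpos : 0 < d := by
        rcases Nat.eq_zero_or_pos d with h | h
        · rw [h, mul_zero] at hdN; omega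
        · exact h
      refine ⟨d * (c b - c a), ?_⟩
      -- x = d*(cb-ca) / N
      have hMR : (M : ℝ) = (q : ℝ) ^ b - (q : ℝ) ^ a := by
        rw [hMdef]
        push_cast [Nat.cast_sub hpowle]
        ring
      have hNR2 : (N : ℝ) = (M : ℝ) * d := by exact_mod_cast hdN
      rw [eq_div_iff (ne_of_gt hNR)]
      rw [hNR2]
      have h5 : (M : ℝ) * x = (c b : ℝ) - c a := by rw [hMR]; linarith
      push_cast [Nat.cast_sub hcab]
      linear_combination (d : ℝ) * h5
    -- pigeonhole
    have hcard' : hfin.toFinset.card ≤ n := by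
      rwa [Set.ncard_eq_toFinset_card _ hfin] at hcard
    have hlt : hfin.toFinset.card < (Finset.univ : Finset (Fin (n + 1))).card := by
      simpa using Nat.lt_succ_of_le hcard'
    obtain ⟨i, -, j, -, hij, hfij⟩ :=
      Finset.exists_ne_map_eq_of_card_lt_of_maps_to hlt
        (f := fun i : Fin (n + 1) => (q : ℝ) ^ (i : ℕ) * x - c (i : ℕ))
        (t := hfin.toFinset)
        (fun i _ => hfin.mem_toFinset.mpr (hc (i : ℕ)))
    rcases lt_or_gt_of_ne hij with h | h
    · exact main i j h (Nat.lt_succ_iff.mp j.isLt) hfij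
    · exact main j i h (Nat.lt_succ_iff.mp i.isLt) hfij.symm
  -- conclude
  intro b hb
  obtain ⟨m, hm⟩ := reduce b hb
  obtain ⟨k, hk⟩ := key _ hm
  refine ⟨k + m * N, ?_⟩
  have hb_eq : b = (k : ℝ) / N + m := by linarith [hk]
  rw [hb_eq]
  push_cast
  field_simp
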